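/- For all integers p ≥ 1 and n ≥ 1, A(p,n,n−1) = binom(n,2) · (2^p − 1). -/

import Mathlib

open MulAction Equiv

lemma quot_card {n : ℕ} (a b : Fin n) (hab : a ≠ b) (G : Subgroup (Equiv.Perm (Fin n)))
    (hG : ∀ g ∈ G, g = 1 ∨ g = Equiv.swap a b) (hs : Equiv.swap a b ∈ G) :
    Nat.card (MulAction.orbitRel.Quotient G (Fin n)) = n - 1 := by
  have hbij : Function.Bijective (fun x : {x : Fin n // x ≠ b} =>
      (Quotient.mk'' x.1 : MulAction.orbitRel.Quotient G (Fin n))) := by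
    constructor
    · rintro ⟨x, hx⟩ ⟨y, hy⟩ h
      have hrel : x ∈ MulAction.orbit G y := Quotient.eq''.mp h
      obtain ⟨⟨g, hg⟩, hgx⟩ := hrel
      simp only [Subtype.mk.injEq]
      rcases hG g hg with h1 | h1
      · simpa [h1, Equiv.Perm.smul_def] using hgx.symm
      · subst h1
        rcases eq_or_ne y a with rfl | hya
        · simp [Equiv.Perm.smul_def] at hgx
          exact absurd hgx.symm hx
        · simp [Equiv.Perm.smul_def, Equiv.swap_apply_of_ne_of_ne hya hy] at hgx
          exact hgx.symm
    · intro q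
      induction q using Quotient.inductionOn' with
      | h z =>
        rcases eq_or_ne z b with h | hz
        · refine ⟨⟨a, hab⟩, ?_⟩
          rw [h]
          exact Quotient.sound' ⟨⟨Equiv.swap a b, hs⟩, by simp [Equiv.Perm.smul_def]⟩
        · exact ⟨⟨z, hz⟩, rfl⟩
  rw [← Nat.card_eq_of_bijective _ hbij]
  simp [Nat.card_eq_fintype_card]

lemma quot_card_bot {n : ℕ} (G : Subgroup (Equiv.Perm (Fin n)))
    (hG : ∀ g ∈ G, g = 1) :
    Nat.card (MulAction.orbitRel.Quotient G (Fin n)) = n := by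
  have hbij : Function.Bijective (fun x : Fin n =>
      (Quotient.mk'' x : MulAction.orbitRel.Quotient G (Fin n))) := by
    constructor
    · intro x y h
      obtain ⟨⟨g, hg⟩, hgx⟩ := Quotient.eq''.mp h
      simpa [hG g hg, Equiv.Perm.smul_def] using hgx.symm
    · intro q
      induction q using Quotient.inductionOn' with
      | h z => exact ⟨z, rfl⟩
  rw [← Nat.card_eq_of_bijective _ hbij]
  simp

lemma classify {n : ℕ} (hn : 1 ≤ n) (G : Subgroup (Equiv.Perm (Fin n)))
    (h : Nat.card (MulAction.orbitRel.Quotient G (Fin n)) = n - 1) :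
    ∃ a b, a ≠ b ∧ Equiv.swap a b ∈ G ∧ ∀ g ∈ G, g = 1 ∨ g = Equiv.swap a b := by
  classical
  set Ω := MulAction.orbitRel.Quotient G (Fin n) with hΩ
  have : Finite Ω := Quotient.finite _
  have : Fintype Ω := Fintype.ofFinite _
  have hne : Nonempty Ω := ⟨Quotient.mk'' ⟨0, hn⟩⟩
  have hΩpos : 1 ≤ Nat.card Ω :=
    Nat.one_le_iff_ne_zero.mpr (Nat.card_ne_zero.mpr ⟨hne, inferInstance⟩)
  have hn2 : 2 ≤ n := by omega
  haveI : ∀ ω : Ω, Fintype ω.orbit := fun _ => Fintype.ofFinite _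
  have hsum : ∑ ω : Ω, Nat.card ω.orbit = n := by
    have h2 := Nat.card_congr (MulAction.selfEquivSigmaOrbits' G (Fin n))
    simp only [Nat.card_eq_fintype_card, Fintype.card_fin, Fintype.card_sigma] at h2 ⊢
    exact h2.symm
  have hcard : Fintype.card Ω = n - 1 := by rw [← Nat.card_eq_fintype_card]; exact h
  have hpos : ∀ ω : Ω, 1 ≤ Nat.card ω.orbit := by
    intro ω
    have hne : (ω.orbit).Nonempty := by
      rw [MulAction.orbitRel.Quotient.orbit_eq_orbit_out ω Quotient.out_eq']
      exact MulAction.nonempty_orbit _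
    exact Nat.one_le_iff_ne_zero.mpr
      (Nat.card_ne_zero.mpr ⟨hne.to_subtype, Set.Finite.to_subtype (Set.toFinite _)⟩)
  -- exists orbit with ≥ 2 elements
  have hex : ∃ ω : Ω, 2 ≤ Nat.card ω.orbit := by
    by_contra hcon
    push_neg at hcon
    have hall : ∀ ω ∈ Finset.univ, Nat.card (MulAction.orbitRel.Quotient.orbit ω) = 1 :=
      fun ω _ => le_antisymm (by have := hcon ω; omega) (hpos ω)
    have := Finset.sum_congr rfl hall
    rw [hsum, Finset.sum_const, Finset.card_univ, hcard, smul_eq_mul, mul_one] at this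
    omega
  obtain ⟨ω₀, hω₀⟩ := hex
  -- ω₀ has size exactly 2, all others 1
  have key : Nat.card ω₀.orbit = 2 ∧ ∀ ω : Ω, ω ≠ ω₀ → Nat.card ω.orbit = 1 := by
    have herase : ∑ ω ∈ Finset.univ.erase ω₀, Nat.card ω.orbit = n - 2 := by
      have := Finset.add_sum_erase Finset.univ (fun ω : Ω => Nat.card ω.orbit)
        (Finset.mem_univ ω₀)
      have hle : (Finset.univ.erase ω₀).card • 1 ≤ ∑ ω ∈ Finset.univ.erase ω₀,
          Nat.card ω.orbit := Finset.card_nsmul_le_sum _ _ _ (fun ω _ => hpos ω)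
      have hc : (Finset.univ.erase ω₀).card = n - 2 := by
        rw [Finset.card_erase_of_mem (Finset.mem_univ _), Finset.card_univ, hcard]; omega
      rw [hsum] at this
      rw [hc] at hle
      simp only [smul_eq_mul, mul_one] at hle
      omega
    have h2 : Nat.card ω₀.orbit = 2 := by
      have := Finset.add_sum_erase Finset.univ (fun ω : Ω => Nat.card ω.orbit)
        (Finset.mem_univ ω₀)
      rw [hsum, herase] at this
      omega
    refine ⟨h2, fun ω hω => ?_⟩
    by_contra hcon
    have h3 : 2 ≤ Nat.card ω.orbit := by have := hpos ω; omega
    have hmem : ω ∈ Finset.univ.erase ω₀ := Finset.mem_erase.mpr ⟨hω, Finset.mem_univ _⟩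
    have := Finset.add_sum_erase (Finset.univ.erase ω₀)
      (fun ω : Ω => Nat.card ω.orbit) hmem
    have hle : ((Finset.univ.erase ω₀).erase ω).card • 1 ≤
        ∑ x ∈ (Finset.univ.erase ω₀).erase ω, Nat.card x.orbit :=
      Finset.card_nsmul_le_sum _ _ _ (fun x _ => hpos x)
    have hc2 : ((Finset.univ.erase ω₀).erase ω).card = n - 3 := by
      rw [Finset.card_erase_of_mem hmem, Finset.card_erase_of_mem (Finset.mem_univ _),
        Finset.card_univ, hcard]
      omega
    have hcard3 : 3 ≤ n := by
      by_contra hn3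
      have : n = 2 := by omega
      subst this
      have : (Finset.univ.erase ω₀).card = 0 := by
        rw [Finset.card_erase_of_mem (Finset.mem_univ _), Finset.card_univ, hcard]
      exact absurd (Finset.card_eq_zero.mp this ▸ hmem) (Finset.notMem_empty ω)
    rw [herase] at this
    rw [hc2] at hle
    simp only [smul_eq_mul, mul_one] at hle
    omega
  -- extract a, b
  obtain ⟨hcard2, hrest⟩ := key
  rw [Nat.card_coe_set_eq, Set.ncard_eq_two] at hcard2
  obtain ⟨a, b, hab, horb⟩ := hcard2
  -- every point outside {a, b} is fixed by all of G
  have hfix : ∀ x : Fin n, x ≠ a → x ≠ b → ∀ g ∈ G, g x = x := by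
    intro x hxa hxb g hg
    have hxω : (Quotient.mk'' x : Ω) ≠ ω₀ := by
      intro hcon
      have : x ∈ ω₀.orbit := MulAction.orbitRel.Quotient.mem_orbit.mpr hcon
      rw [horb] at this
      rcases this with h | h
      exacts [hxa h, hxb h]
    have h1 : Nat.card (MulAction.orbit G x) = 1 := by
      have := hrest _ hxω
      rwa [MulAction.orbitRel.Quotient.orbit_mk] at this
    rw [Nat.card_coe_set_eq, Set.ncard_eq_one] at h1
    obtain ⟨y, hy⟩ := h1
    have hxy : x ∈ MulAction.orbit G x := MulAction.mem_orbit_self x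
    have hgx : g • x ∈ MulAction.orbit G x := ⟨⟨g, hg⟩, rfl⟩
    rw [hy] at hxy hgx
    simp only [Set.mem_singleton_iff] at hxy hgx
    rw [← hxy] at hgx
    exact hgx
  -- orbit of a and b is {a, b}
  have horba : MulAction.orbit G a = {a, b} := by
    have : a ∈ ω₀.orbit := by rw [horb]; left; rfl
    have := MulAction.orbitRel.Quotient.mem_orbit.mpr
      (MulAction.orbitRel.Quotient.mem_orbit.mp this)
    rw [← MulAction.orbitRel.Quotient.orbit_mk (G := G) a,
      MulAction.orbitRel.Quotient.mem_orbit.mp ‹a ∈ ω₀.orbit›]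
    exact horb
  have hmema : ∀ g ∈ G, g a = a ∨ g a = b := by
    intro g hg
    have : g • a ∈ MulAction.orbit G a := ⟨⟨g, hg⟩, rfl⟩
    rw [horba] at this
    exact this
  have hmemb : ∀ g ∈ G, g b = a ∨ g b = b := by
    intro g hg
    have hb : b ∈ MulAction.orbit G a := by rw [horba]; right; rfl
    have : g • b ∈ MulAction.orbit G a := by
      obtain ⟨⟨k, hk⟩, hkb⟩ := hb
      exact ⟨⟨g * k, mul_mem hg hk⟩, by simp [← hkb, mul_smul]⟩
    rw [horba] at this
    exact this
  -- classification
  have hclass : ∀ g ∈ G, g = 1 ∨ g = Equiv.swap a b := by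
    intro g hg
    rcases hmema g hg with hga | hga
    · left
      apply Equiv.ext
      intro x
      rw [Equiv.Perm.coe_one, id_eq]
      rcases eq_or_ne x a with rfl | hxa
      · exact hga
      rcases eq_or_ne x b with rfl | hxb
      · rcases hmemb g hg with hgb | hgb
        · exact absurd (g.injective (hgb.trans hga.symm)) hxa
        · exact hgb
      · exact hfix x hxa hxb g hg
    · right
      apply Equiv.ext
      intro x
      rcases eq_or_ne x a with rfl | hxa
      · rw [hga, Equiv.swap_apply_left]
      rcases eq_or_ne x b with rfl | hxb
      · rcases hmemb g hg with hgb | hgb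
        · rw [hgb, Equiv.swap_apply_right]
        · exact absurd (g.injective (hga.trans hgb.symm)) (Ne.symm hxa)
      · rw [hfix x hxa hxb g hg, Equiv.swap_apply_of_ne_of_ne hxa hxb]
  -- swap is in G
  have hb : b ∈ MulAction.orbit G a := by rw [horba]; right; rfl
  obtain ⟨⟨g, hg⟩, hgab⟩ := hb
  have hswap : Equiv.swap a b ∈ G := by
    rcases hclass g hg with rfl | rfl
    · simp [Equiv.Perm.smul_def] at hgab
      exact absurd hgab hab
    · exact hg
  exact ⟨a, b, hab, hswap, hclass⟩

lemma card_pairs (n : ℕ) : Nat.card {q : Fin n × Fin n // q.1 < q.2} = n.choose 2 := by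
  have e : {q : Fin n × Fin n // q.1 < q.2} ≃ Σ b : Fin n, Fin b.val :=
    { toFun := fun q => ⟨q.1.2, ⟨q.1.1.val, q.2⟩⟩
      invFun := fun x => ⟨(⟨x.2.val, x.2.isLt.trans x.1.isLt⟩, x.1),
        by simpa [Fin.lt_def] using x.2.isLt⟩
      left_inv := fun q => rfl
      right_inv := fun x => rfl }
  rw [Nat.card_congr e, Nat.card_eq_fintype_card, Fintype.card_sigma]
  simp only [Fintype.card_fin]
  exact (Fin.sum_univ_eq_sum_range (fun i => i) n).trans
    (by rw [Finset.sum_range_id, Nat.choose_two_right])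

lemma card_bools (p : ℕ) : Nat.card {f : Fin p → Bool // ∃ i, f i = true} = 2 ^ p - 1 := by
  classical
  rw [Nat.card_eq_fintype_card]
  have h1 : Fintype.card {f : Fin p → Bool // ¬∃ i, f i = true} = 1 := by
    rw [Fintype.card_eq_one_iff]
    refine ⟨⟨fun _ => false, by simp⟩, ?_⟩
    rintro ⟨f, hf⟩
    push_neg at hf
    exact Subtype.ext (funext fun i => by simpa using hf i)
  have h3 : Fintype.card (Fin p → Bool) = 2 ^ p := by simp
  have h4 : Fintype.card {f : Fin p → Bool // ∃ i, f i = true} ≤ Fintype.card (Fin p → Bool) :=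
    Fintype.card_subtype_le _
  have h2 := Fintype.card_subtype_compl (fun f : Fin p → Bool => ∃ i, f i = true)
  rw [h1, h3] at h2
  rw [h3] at h4
  set k := Fintype.card {f : Fin p → Bool // ∃ i, f i = true} with hk
  clear_value k
  clear h1 hk
  omega

lemma closure_classify {α : Type*} [DecidableEq α] {a b : α} {s : Set (Equiv.Perm α)}
    (hσ : ∀ x ∈ s, x = 1 ∨ x = Equiv.swap a b) :
    ∀ g ∈ Subgroup.closure s, g = 1 ∨ g = Equiv.swap a b := by
  intro g hg
  induction hg using Subgroup.closure_induction with
  | mem x hx => exact hσ x hx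
  | one => exact Or.inl rfl
  | mul x y hx hy ihx ihy =>
    rcases ihx with rfl | rfl <;> rcases ihy with rfl | rfl <;>
      simp [Equiv.swap_mul_self]
  | inv x hx ihx => rcases ihx with rfl | rfl <;> simp

/-- `A p n k` is the number of `p`-tuples of pairwise commuting permutations of
`{1,…,n}` whose generated subgroup acts on `{1,…,n}` with exactly `k` orbits. -/
noncomputable def A (p n k : ℕ) : ℕ :=
  Nat.card {σ : Fin p → Equiv.Perm (Fin n) //
    (∀ i j, Commute (σ i) (σ j)) ∧
    Nat.card (MulAction.orbitRel.Quotient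
      (Subgroup.closure (Set.range σ)) (Fin n)) = k}


lemma prop1 {n p : ℕ} (a b : Fin n) (f : Fin p → Bool) :
    ∀ i j, Commute (if f i then Equiv.swap a b else 1) (if f j then Equiv.swap a b else 1) := by
  intro i j
  split <;> split <;>
    first
      | exact Commute.refl _
      | exact Commute.one_left _
      | exact Commute.one_right _

lemma prop2 {n p : ℕ} (a b : Fin n) (hab : a ≠ b) (f : Fin p → Bool) (hex : ∃ i, f i = true) :
    Nat.card (MulAction.orbitRel.Quotient
      (Subgroup.closure (Set.range (fun i => if f i then Equiv.swap a b else 1))) (Fin n)) =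
      n - 1 := by
  obtain ⟨i, hi⟩ := hex
  refine quot_card a b hab _ (closure_classify ?_) ?_
  · rintro g ⟨j, rfl⟩
    dsimp only
    split
    · exact Or.inr rfl
    · exact Or.inl rfl
  · exact Subgroup.subset_closure ⟨i, by simp [hi]⟩

theorem stmt17 (p n : ℕ) (hp : 1 ≤ p) (hn : 1 ≤ n) :
    A p n (n - 1) = n.choose 2 * (2 ^ p - 1) := by
  classical
  rw [← card_pairs n, ← card_bools p, ← Nat.card_prod]
  simp only [A]
  refine (Nat.card_eq_of_bijective (fun x => ⟨fun i =>
    if x.2.1 i then Equiv.swap x.1.1.1 x.1.1.2 else 1,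
    prop1 x.1.1.1 x.1.1.2 x.2.1,
    prop2 x.1.1.1 x.1.1.2 (ne_of_lt x.1.2) x.2.1 x.2.2⟩) ⟨?_, ?_⟩).symm
  · -- injective
    rintro ⟨⟨⟨a, b⟩, hab⟩, ⟨f, hf⟩⟩ ⟨⟨⟨a', b'⟩, hab'⟩, ⟨f', hf'⟩⟩ h
    rw [Subtype.ext_iff] at h
    dsimp only at h hab hab'
    obtain ⟨i, hi⟩ := hf
    have hi' := congrFun h i
    rw [if_pos hi] at hi'
    have hf'i : f' i = true := by
      by_contra hcon
      rw [if_neg hcon] at hi'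
      exact absurd (Equiv.swap_eq_one_iff.mp hi') (ne_of_lt hab)
    rw [if_pos hf'i] at hi'
    -- hi' : swap a b = swap a' b'
    have ha' : a' = a ∨ a' = b := by
      by_contra hcon
      push_neg at hcon
      have h1 : Equiv.swap a b a' = b' := by rw [hi']; exact Equiv.swap_apply_left a' b'
      rw [Equiv.swap_apply_of_ne_of_ne hcon.1 hcon.2] at h1
      exact absurd h1 (ne_of_lt hab')
    have hb' : b' = a ∨ b' = b := by
      by_contra hcon
      push_neg at hcon
      have h1 : Equiv.swap a b b' = a' := by rw [hi']; exact Equiv.swap_apply_right a' b'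
      rw [Equiv.swap_apply_of_ne_of_ne hcon.1 hcon.2] at h1
      exact absurd h1.symm (ne_of_lt hab')
    have hpair : a = a' ∧ b = b' := by
      rcases ha' with h1 | h1 <;> rcases hb' with h2 | h2
      · exact absurd (h1.trans h2.symm) (ne_of_lt hab')
      · exact ⟨h1.symm, h2.symm⟩
      · rw [h1, h2] at hab'
        exact absurd (hab.trans hab') (lt_irrefl _)
      · exact absurd (h1.trans h2.symm) (ne_of_lt hab')
    obtain ⟨rfl, rfl⟩ := hpair
    have hff' : f = f' := by
      funext j
      have hj := congrFun h j
      by_cases h1 : f j <;> by_cases h2 : f' j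
      · rw [h1, h2]
      · rw [if_pos h1, if_neg h2] at hj
        exact absurd (Equiv.swap_eq_one_iff.mp hj) (ne_of_lt hab)
      · rw [if_neg h1, if_pos h2] at hj
        exact absurd (Equiv.swap_eq_one_iff.mp hj.symm) (ne_of_lt hab)
      · rw [Bool.not_eq_true] at h1 h2
        rw [h1, h2]
    subst hff'
    rfl
  · -- surjective
    rintro ⟨σ, hcomm, hcard⟩
    obtain ⟨a, b, hab, hswapmem, hclass⟩ := classify hn _ hcard
    have main : ∀ a b : Fin n, a < b →
        Equiv.swap a b ∈ Subgroup.closure (Set.range σ) →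
        (∀ g ∈ Subgroup.closure (Set.range σ), g = 1 ∨ g = Equiv.swap a b) →
        ∃ x : {q : Fin n × Fin n // q.1 < q.2} × {f : Fin p → Bool // ∃ i, f i = true},
          (fun i => if x.2.1 i then Equiv.swap x.1.1.1 x.1.1.2 else 1) = σ := by
      intro a b hlt hmem hcl
      have hex : ∃ i, decide (σ i ≠ 1) = true := by
        by_contra hcon
        push_neg at hcon
        have hall : ∀ i, σ i = 1 := by
          intro i
          have := hcon i
          simpa using this
        have hbot : ∀ g ∈ Subgroup.closure (Set.range σ), g = 1 := by
          intro g hg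
          have hle : Subgroup.closure (Set.range σ) ≤ ⊥ := by
            rw [Subgroup.closure_le]
            rintro _ ⟨i, rfl⟩
            simp [hall i]
          simpa using hle hg
        have := quot_card_bot _ hbot
        rw [hcard] at this
        omega
      refine ⟨⟨⟨(a, b), hlt⟩, ⟨fun i => decide (σ i ≠ 1), hex⟩⟩, ?_⟩
      funext i
      dsimp only
      rcases hcl (σ i) (Subgroup.subset_closure ⟨i, rfl⟩) with h1 | h1
      · simp [h1]
      · simp only [h1]
        simp [Equiv.swap_eq_one_iff, ne_of_lt hlt]
    rcases hab.lt_or_gt with hlt | hlt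
    · obtain ⟨x, hx⟩ := main a b hlt hswapmem hclass
      exact ⟨x, Subtype.ext hx⟩
    · rw [Equiv.swap_comm] at hswapmem hclass
      obtain ⟨x, hx⟩ := main b a hlt hswapmem hclass
      exact ⟨x, Subtype.ext hx⟩
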